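/- arXiv:1506.01925 — 5 statements merged into one kernel-verified Lean document; each statement's English description precedes it below -/
import Mathlib

section
/- Let k be a field of characteristic different from 2 and 3 containing a primitive third root of unity, and let F = k(x_1, x_2, x_3, x_4) be the field of rational functions in four variables over k. Suppose E is a field extension of F and t_2, t_3, t_4 ∈ E satisfy t_i^6 = x_i^2(x_i - 1) / (x_1^2(x_1 - 1)) for i = 2, 3, 4. Then the intermediate field F(t_2, t_3, t_4) has degree exactly 216 = 6^3 over F. -/
set_option maxHeartbeats 4000000

open Polynomial


open Polynomial

lemma rootMultiplicity_pow' {K : Type*} [CommRing K] [IsDomain K] {q : K[X]} (hq : q ≠ 0)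
    (x : K) : ∀ d : ℕ, rootMultiplicity x (q ^ d) = d * rootMultiplicity x q
  | 0 => by simp [rootMultiplicity_eq_zero (show ¬ IsRoot 1 x by simp [IsRoot])]
  | (d+1) => by
    rw [pow_succ, rootMultiplicity_mul (mul_ne_zero (pow_ne_zero _ hq) hq),
      rootMultiplicity_pow' hq x d]
    ring

lemma core_notpow {K : Type*} [Field K] {e : K} (he : e ≠ 0) {d : ℕ} (hd : 2 ≤ d)
    (f : RatFunc K) : f ^ d ≠ RatFunc.C e * RatFunc.X ^ 2 * (RatFunc.X - 1) := by
  intro h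
  set p : K[X] := Polynomial.C e * Polynomial.X ^ 2 * (Polynomial.X - 1) with hp
  have hmap : algebraMap K[X] (RatFunc K) p
      = RatFunc.C e * RatFunc.X ^ 2 * (RatFunc.X - 1) := by
    simp [hp, map_mul, map_pow, map_sub, RatFunc.algebraMap_C, RatFunc.algebraMap_X, map_one]
  have hX1 : (Polynomial.X - 1 : K[X]) ≠ 0 := by simpa using X_sub_C_ne_zero (1 : K)
  have hCe : (Polynomial.C e : K[X]) ≠ 0 := fun hh => he (by simpa using hh)
  have hp0 : p ≠ 0 := mul_ne_zero (mul_ne_zero hCe (pow_ne_zero _ X_ne_zero)) hX1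
  have hf0 : f ≠ 0 := by
    intro h0
    rw [h0, zero_pow (by omega)] at h
    exact hp0 (by apply RatFunc.algebraMap_injective K; simp [hmap, ← h])
  have hnum : algebraMap K[X] (RatFunc K) f.num = f * algebraMap K[X] (RatFunc K) f.denom := by
    exact (div_eq_iff (RatFunc.algebraMap_ne_zero (RatFunc.denom_ne_zero f))).mp
      (RatFunc.num_div_denom f)
  have key : f.num ^ d = p * f.denom ^ d := by
    apply RatFunc.algebraMap_injective K
    rw [map_pow, map_mul, map_pow, hnum, mul_pow, h, hmap]
  have hnum0 : f.num ≠ 0 := RatFunc.num_ne_zero hf0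
  have hden0 : f.denom ≠ 0 := RatFunc.denom_ne_zero f
  have hkey := congrArg (rootMultiplicity (1 : K)) key
  have hrm1 : rootMultiplicity (1:K) (Polynomial.C e * Polynomial.X ^ 2) = 0 :=
    rootMultiplicity_eq_zero (by simp [IsRoot, he])
  have hrm2 : rootMultiplicity (1:K) (Polynomial.X - 1) = 1 := by
    rw [show (Polynomial.X - 1 : K[X]) = Polynomial.X - Polynomial.C 1 by simp]
    exact rootMultiplicity_X_sub_C_self
  rw [rootMultiplicity_pow' hnum0, rootMultiplicity_mul (mul_ne_zero hp0 (pow_ne_zero _ hden0)),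
    rootMultiplicity_pow' hden0, hp,
    rootMultiplicity_mul (mul_ne_zero (mul_ne_zero hCe (pow_ne_zero _ X_ne_zero)) hX1),
    hrm1, hrm2] at hkey
  set m1 := rootMultiplicity (1:K) f.num
  set m2 := rootMultiplicity (1:K) f.denom
  have h1 : d * m1 - d * m2 = 1 := by rw [hkey]; omega
  have h2 : d ∣ 1 := h1 ▸ Nat.dvd_sub (Dvd.intro m1 rfl) (Dvd.intro m2 rfl)
  have := Nat.le_of_dvd one_pos h2
  omega
open IntermediateField

lemma step_deg6 {F₀ E : Type*} [Field F₀] [Field E] [Algebra F₀ E] {a : F₀} {t : E}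
    (h6 : t ^ 6 = algebraMap F₀ E a)
    (hsq : ∀ s : F₀, s ^ 2 ≠ a) (hcb : ∀ s : F₀, s ^ 3 ≠ a) :
    Module.finrank F₀ (adjoin F₀ {t} : IntermediateField F₀ E) = 6 := by
  have haev : (aeval t) ((X : F₀[X]) ^ 6 - C a) = 0 := by
    simp only [map_sub, map_pow, aeval_X, aeval_C, h6, sub_self]
  have hne : ((X : F₀[X]) ^ 6 - C a) ≠ 0 := X_pow_sub_C_ne_zero (by norm_num) a
  have hint : IsIntegral F₀ t := ⟨X ^ 6 - C a, monic_X_pow_sub_C a (by norm_num), by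
    simpa [Polynomial.aeval_def] using haev⟩
  haveI : FiniteDimensional F₀ (adjoin F₀ {t} : IntermediateField F₀ E) :=
    adjoin.finiteDimensional hint
  have hub : Module.finrank F₀ (adjoin F₀ {t} : IntermediateField F₀ E) ≤ 6 := by
    rw [adjoin.finrank hint]
    have := natDegree_le_of_dvd (minpoly.dvd F₀ t haev) hne
    simpa [natDegree_X_pow_sub_C] using this
  -- minpoly of t^3 is X^2 - C a
  have haev2 : (aeval (t ^ 3)) ((X : F₀[X]) ^ 2 - C a) = 0 := by
    simp only [map_sub, map_pow, aeval_X, aeval_C, ← pow_mul]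
    norm_num [h6]
  have haev3 : (aeval (t ^ 2)) ((X : F₀[X]) ^ 3 - C a) = 0 := by
    simp only [map_sub, map_pow, aeval_X, aeval_C, ← pow_mul]
    norm_num [h6]
  have hm2 : minpoly F₀ (t ^ 3) = X ^ 2 - C a :=
    (minpoly.eq_of_irreducible_of_monic
      (X_pow_sub_C_irreducible_of_prime Nat.prime_two hsq) haev2
      (monic_X_pow_sub_C a (by norm_num))).symm
  have hm3 : minpoly F₀ (t ^ 2) = X ^ 3 - C a :=
    (minpoly.eq_of_irreducible_of_monic
      (X_pow_sub_C_irreducible_of_prime Nat.prime_three hcb) haev3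
      (monic_X_pow_sub_C a (by norm_num))).symm
  have hint2 : IsIntegral F₀ (t ^ 3) := hint.pow 3
  have hint3 : IsIntegral F₀ (t ^ 2) := hint.pow 2
  have hd2 : Module.finrank F₀ (adjoin F₀ {t ^ 3} : IntermediateField F₀ E) = 2 := by
    rw [adjoin.finrank hint2, hm2, natDegree_X_pow_sub_C]
  have hd3 : Module.finrank F₀ (adjoin F₀ {t ^ 2} : IntermediateField F₀ E) = 3 := by
    rw [adjoin.finrank hint3, hm3, natDegree_X_pow_sub_C]
  have hdvd : ∀ u : E, (adjoin F₀ {u} : IntermediateField F₀ E) ≤ adjoin F₀ {t} →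
      Module.finrank F₀ (adjoin F₀ {u} : IntermediateField F₀ E) ∣
        Module.finrank F₀ (adjoin F₀ {t} : IntermediateField F₀ E) := by
    intro u hle
    have h := IntermediateField.relfinrank_mul_relfinrank
      (bot_le : ⊥ ≤ (adjoin F₀ {u} : IntermediateField F₀ E)) hle
    rw [IntermediateField.relfinrank_bot_left, IntermediateField.relfinrank_bot_left] at h
    exact ⟨_, h.symm⟩
  have h2dvd := hdvd (t ^ 3) (by
    rw [adjoin_simple_le_iff]; exact pow_mem (mem_adjoin_simple_self F₀ t) 3)
  have h3dvd := hdvd (t ^ 2) (by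
    rw [adjoin_simple_le_iff]; exact pow_mem (mem_adjoin_simple_self F₀ t) 2)
  rw [hd2] at h2dvd
  rw [hd3] at h3dvd
  have h6dvd : 6 ∣ Module.finrank F₀ (adjoin F₀ {t} : IntermediateField F₀ E) :=
    (show Nat.Coprime 2 3 by norm_num).mul_dvd_of_dvd_of_dvd h2dvd h3dvd
  have hpos : 0 < Module.finrank F₀ (adjoin F₀ {t} : IntermediateField F₀ E) :=
    Module.finrank_pos
  have := Nat.le_of_dvd hpos h6dvd
  omega
open Polynomial

lemma splits_aux {F₀ Ω : Type*} [Field F₀] [Field Ω] [IsAlgClosed Ω]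
    (φ : F₀ →+* RatFunc Ω) {a : F₀} {w : Ω} (ha : φ a = RatFunc.C w) :
    ((((X : F₀[X]) ^ 6 - C a)).map φ).Splits := by
  have hmap : ((X : F₀[X]) ^ 6 - C a).map φ
      = (Polynomial.X ^ 6 - Polynomial.C w : Polynomial Ω).map (RatFunc.C : Ω →+* RatFunc Ω) := by
    simp [Polynomial.map_sub, Polynomial.map_pow, map_X, map_C, ha]
  rw [hmap]
  have h1 : (Polynomial.X ^ 6 - Polynomial.C w : Polynomial Ω).Splits := IsAlgClosed.splits _
  have h2 := h1.map (RatFunc.C : Ω →+* RatFunc Ω)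
  exact h2


lemma aux_hom (k : Type*) [Field k] (Ω : Type*) [Field Ω]
    (ι : MvPolynomial (Fin 3) k →+* Ω) (hι : Function.Injective ι)
    (i : Fin 4) (hi : i ≠ 0) :
    ∃ φ : FractionRing (MvPolynomial (Fin 4) k) →+* RatFunc Ω,
      φ (algebraMap (MvPolynomial (Fin 4) k) _ (MvPolynomial.X i)) = RatFunc.X ∧
      ∀ j : Fin 4, j ≠ i → ∃ w, w ≠ 0 ∧ w ≠ 1 ∧
        φ (algebraMap (MvPolynomial (Fin 4) k) _ (MvPolynomial.X j)) = RatFunc.C w := by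
  set g : MvPolynomial (Fin 4) k →+* RatFunc Ω :=
    ((algebraMap (Polynomial Ω) (RatFunc Ω)).comp ((Polynomial.mapRingHom ι).comp
      (((MvPolynomial.finSuccEquiv k 3).toRingEquiv.toRingHom).comp
        ((MvPolynomial.renameEquiv k (Equiv.swap i 0)).toRingEquiv.toRingHom)))) with hg_def
  have hg : Function.Injective g := by
    simp only [hg_def, RingHom.coe_comp]
    refine ((RatFunc.algebraMap_injective Ω).comp ((Polynomial.map_injective ι hι).comp
      (Function.Injective.comp ?_ ?_)))
    · exact (MvPolynomial.finSuccEquiv k 3).toRingEquiv.injective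
    · exact (MvPolynomial.renameEquiv k (Equiv.swap i 0)).toRingEquiv.injective
  have hgX : ∀ j : Fin 4, g (MvPolynomial.X j)
      = algebraMap (Polynomial Ω) (RatFunc Ω)
        (Polynomial.map ι ((MvPolynomial.finSuccEquiv k 3)
          (MvPolynomial.X (Equiv.swap i 0 j)))) := by
    intro j
    simp [hg_def, MvPolynomial.renameEquiv_apply, MvPolynomial.rename_X]
  refine ⟨IsFractionRing.lift hg, ?_, ?_⟩
  · rw [IsFractionRing.lift_algebraMap, hgX, Equiv.swap_apply_left,
      MvPolynomial.finSuccEquiv_X_zero, Polynomial.map_X, RatFunc.algebraMap_X]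
  · intro j hj
    have hm0 : Equiv.swap i 0 j ≠ 0 := by
      rcases eq_or_ne j 0 with rfl | hj0
      · rwa [Equiv.swap_apply_right]
      · rwa [Equiv.swap_apply_of_ne_of_ne hj hj0]
    obtain ⟨m', hm'⟩ : ∃ m' : Fin 3, Equiv.swap i 0 j = Fin.succ m' :=
      ⟨(Equiv.swap i 0 j).pred hm0, (Fin.succ_pred _ hm0).symm⟩
    refine ⟨ι (MvPolynomial.X m'), ?_, ?_, ?_⟩
    · intro h0
      refine MvPolynomial.X_ne_zero (R := k) m' (hι ?_)
      rw [map_zero]; exact h0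
    · intro h1
      have h1' : ι (MvPolynomial.X m') = ι 1 := by rw [map_one]; exact h1
      have h2' : (MvPolynomial.X m' : MvPolynomial (Fin 3) k) = 1 := hι h1'
      have h3' := congrArg (MvPolynomial.eval (0 : Fin 3 → k)) h2'
      simp at h3'
    · rw [IsFractionRing.lift_algebraMap, hgX, hm', MvPolynomial.finSuccEquiv_X_succ,
        Polynomial.map_C, RatFunc.algebraMap_C]
open Polynomial IntermediateField

section helpers

lemma phi_a_special {F K : Type*} [Field F] [Field K] (φ : F →+* RatFunc K)
    {xi x0 : F} (hxi : φ xi = RatFunc.X) {w0 : K} (h0 : φ x0 = RatFunc.C w0)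
    (hw0 : w0 ≠ 0) (hw1 : w0 ≠ 1) :
    ∃ e : K, e ≠ 0 ∧
      φ (xi ^ 2 * (xi - 1) / (x0 ^ 2 * (x0 - 1)))
        = RatFunc.C e * RatFunc.X ^ 2 * (RatFunc.X - 1) := by
  have hD : (w0 ^ 2 * (w0 - 1)) ≠ 0 :=
    mul_ne_zero (pow_ne_zero _ hw0) (sub_ne_zero.mpr hw1)
  have hCw : (RatFunc.C w0 : RatFunc K) ≠ 0 := by
    rwa [ne_eq, _root_.map_eq_zero]
  have hCw1 : (RatFunc.C w0 - 1 : RatFunc K) ≠ 0 := by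
    rw [show (1 : RatFunc K) = RatFunc.C 1 from (map_one _).symm, ← map_sub, ne_eq,
      _root_.map_eq_zero]
    exact sub_ne_zero.mpr hw1
  refine ⟨(w0 ^ 2 * (w0 - 1))⁻¹, inv_ne_zero hD, ?_⟩
  simp only [map_div₀, map_mul, map_pow, map_sub, map_one, map_inv₀, hxi, h0]
  field_simp

lemma phi_a_const {F K : Type*} [Field F] [Field K] (φ : F →+* RatFunc K)
    {xj x0 : F} {wj w0 : K} (hj : φ xj = RatFunc.C wj) (h0 : φ x0 = RatFunc.C w0) :
    ∃ c : K, φ (xj ^ 2 * (xj - 1) / (x0 ^ 2 * (x0 - 1))) = RatFunc.C c := by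
  refine ⟨(wj ^ 2 * (wj - 1)) / (w0 ^ 2 * (w0 - 1)), ?_⟩
  simp only [map_div₀, map_mul, map_pow, map_sub, map_one, hj, h0]

lemma int_and_dvd {F E : Type*} [Field F] [Field E] [Algebra F E] {b : F} {t : E}
    (h : t ^ 6 = algebraMap F E b) :
    IsIntegral F t ∧ minpoly F t ∣ ((X : F[X]) ^ 6 - C b) := by
  have haev : (aeval t) ((X : F[X]) ^ 6 - C b) = 0 := by
    simp only [map_sub, map_pow, aeval_X, aeval_C, h, sub_self]
  exact ⟨⟨X ^ 6 - C b, monic_X_pow_sub_C b (by norm_num), by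
    simpa [Polynomial.aeval_def] using haev⟩, minpoly.dvd F t haev⟩

end helpers

/-- Let `k` be a field of characteristic different from 2 and 3 containing a
primitive third root of unity, and let `F = k(x₁, x₂, x₃, x₄)` be the field of rational
functions in four variables over `k`. Suppose `E` is a field extension of `F` and
`t₂, t₃, t₄ ∈ E` satisfy `tᵢ⁶ = xᵢ²(xᵢ - 1) / (x₁²(x₁ - 1))` for `i = 2, 3, 4`. Then
`F(t₂, t₃, t₄)` has degree exactly `216 = 6³` over `F`. -/
theorem stmt_0 (k : Type*) [Field k] (h2 : (2 : k) ≠ 0) (h3 : (3 : k) ≠ 0)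
    (ω : k) (hω : IsPrimitiveRoot ω 3)
    (E : Type*) [Field E] [Algebra (FractionRing (MvPolynomial (Fin 4) k)) E]
    (x : Fin 4 → FractionRing (MvPolynomial (Fin 4) k))
    (hx : ∀ i, x i = algebraMap (MvPolynomial (Fin 4) k)
      (FractionRing (MvPolynomial (Fin 4) k)) (MvPolynomial.X i))
    (t₂ t₃ t₄ : E)
    (ht₂ : t₂ ^ 6 = algebraMap (FractionRing (MvPolynomial (Fin 4) k)) E
      ((x 1) ^ 2 * (x 1 - 1) / ((x 0) ^ 2 * (x 0 - 1))))
    (ht₃ : t₃ ^ 6 = algebraMap (FractionRing (MvPolynomial (Fin 4) k)) E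
      ((x 2) ^ 2 * (x 2 - 1) / ((x 0) ^ 2 * (x 0 - 1))))
    (ht₄ : t₄ ^ 6 = algebraMap (FractionRing (MvPolynomial (Fin 4) k)) E
      ((x 3) ^ 2 * (x 3 - 1) / ((x 0) ^ 2 * (x 0 - 1)))) :
    Module.finrank (FractionRing (MvPolynomial (Fin 4) k))
      (IntermediateField.adjoin (FractionRing (MvPolynomial (Fin 4) k))
        {t₂, t₃, t₄} : IntermediateField (FractionRing (MvPolynomial (Fin 4) k)) E) = 216 := by
  set Ω := AlgebraicClosure (FractionRing (MvPolynomial (Fin 3) k)) with hΩdef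
  set ι : MvPolynomial (Fin 3) k →+* Ω :=
    (algebraMap (FractionRing (MvPolynomial (Fin 3) k)) Ω).comp
      (algebraMap (MvPolynomial (Fin 3) k) (FractionRing (MvPolynomial (Fin 3) k))) with hιdef
  have hιinj : Function.Injective ι :=
    (algebraMap (FractionRing (MvPolynomial (Fin 3) k)) Ω).injective.comp
      (IsFractionRing.injective (MvPolynomial (Fin 3) k)
        (FractionRing (MvPolynomial (Fin 3) k)))
  obtain ⟨a, hadef⟩ : ∃ a : Fin 4 → (FractionRing (MvPolynomial (Fin 4) k)),
      a = fun j => (x j) ^ 2 * (x j - 1) / ((x 0) ^ 2 * (x 0 - 1)) := ⟨_, rfl⟩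
  have ht₂' : t₂ ^ 6 = algebraMap (FractionRing (MvPolynomial (Fin 4) k)) E (a 1) := by rw [hadef]; exact ht₂
  have ht₃' : t₃ ^ 6 = algebraMap (FractionRing (MvPolynomial (Fin 4) k)) E (a 2) := by rw [hadef]; exact ht₃
  have ht₄' : t₄ ^ 6 = algebraMap (FractionRing (MvPolynomial (Fin 4) k)) E (a 3) := by rw [hadef]; exact ht₄
  -- the three embeddings
  obtain ⟨φ₁, hφ₁X, hφ₁C⟩ := aux_hom k Ω ι hιinj 1 (by decide)
  obtain ⟨φ₂, hφ₂X, hφ₂C⟩ := aux_hom k Ω ι hιinj 2 (by decide)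
  obtain ⟨φ₃, hφ₃X, hφ₃C⟩ := aux_hom k Ω ι hιinj 3 (by decide)
  -- shapes
  have shape : ∀ (φ : (FractionRing (MvPolynomial (Fin 4) k)) →+* RatFunc Ω) (i : Fin 4),
      (φ (algebraMap (MvPolynomial (Fin 4) k) (FractionRing (MvPolynomial (Fin 4) k)) (MvPolynomial.X i)) = RatFunc.X) →
      (∀ j : Fin 4, j ≠ i → ∃ w, w ≠ 0 ∧ w ≠ 1 ∧
        φ (algebraMap (MvPolynomial (Fin 4) k) (FractionRing (MvPolynomial (Fin 4) k)) (MvPolynomial.X j)) = RatFunc.C w) →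
      i ≠ 0 →
      ∃ e : Ω, e ≠ 0 ∧ φ (a i) = RatFunc.C e * RatFunc.X ^ 2 * (RatFunc.X - 1) := by
    intro φ i hX hC hi0
    obtain ⟨w0, hw00, hw01, hw0⟩ := hC 0 (Ne.symm hi0)
    simp only [hadef]
    exact phi_a_special φ (by rw [hx]; exact hX) (by rw [hx]; exact hw0) hw00 hw01
  have constshape : ∀ (φ : (FractionRing (MvPolynomial (Fin 4) k)) →+* RatFunc Ω) (i : Fin 4),
      (∀ j : Fin 4, j ≠ i → ∃ w, w ≠ 0 ∧ w ≠ 1 ∧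
        φ (algebraMap (MvPolynomial (Fin 4) k) (FractionRing (MvPolynomial (Fin 4) k)) (MvPolynomial.X j)) = RatFunc.C w) →
      ∀ j : Fin 4, j ≠ i → i ≠ 0 →
      ∃ c : Ω, φ (a j) = RatFunc.C c := by
    intro φ i hC j hj hi0
    obtain ⟨wj, _, _, hwj⟩ := hC j hj
    obtain ⟨w0, _, _, hw0⟩ := hC 0 (Ne.symm hi0)
    simp only [hadef]
    exact phi_a_const φ (by rw [hx]; exact hwj) (by rw [hx]; exact hw0)
  obtain ⟨e₁, he₁, hs₁⟩ := shape φ₁ 1 hφ₁X hφ₁C (by decide)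
  obtain ⟨e₂, he₂, hs₂⟩ := shape φ₂ 2 hφ₂X hφ₂C (by decide)
  obtain ⟨e₃, he₃, hs₃⟩ := shape φ₃ 3 hφ₃X hφ₃C (by decide)
  -- claim C1
  have C1 : ∀ d : ℕ, 2 ≤ d → ∀ s : (FractionRing (MvPolynomial (Fin 4) k)), s ^ d ≠ a 1 := by
    intro d hd s hs
    exact core_notpow he₁ hd (φ₁ s) (by rw [← map_pow, hs, hs₁])
  -- claim C2
  have C2 : ∀ d : ℕ, 2 ≤ d → ∀ s : (adjoin (FractionRing (MvPolynomial (Fin 4) k)) {t₂} : IntermediateField (FractionRing (MvPolynomial (Fin 4) k)) E),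
      s ^ d ≠ algebraMap (FractionRing (MvPolynomial (Fin 4) k)) _ (a 2) := by
    intro d hd s hs
    letI : Algebra (FractionRing (MvPolynomial (Fin 4) k)) (RatFunc Ω) := φ₂.toAlgebra
    have halg : algebraMap (FractionRing (MvPolynomial (Fin 4) k)) (RatFunc Ω) = φ₂ := rfl
    have hsp : ∀ s' ∈ ({t₂} : Set E), IsIntegral (FractionRing (MvPolynomial (Fin 4) k)) s' ∧
        ((minpoly (FractionRing (MvPolynomial (Fin 4) k)) s').map (algebraMap (FractionRing (MvPolynomial (Fin 4) k)) (RatFunc Ω))).Splits := by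
      intro s' hs'
      rw [Set.mem_singleton_iff] at hs'
      rw [hs']
      obtain ⟨hint, hdvd⟩ := int_and_dvd ht₂'
      obtain ⟨c, hc⟩ := constshape φ₂ 2 hφ₂C 1 (by decide) (by decide)
      refine ⟨hint, Splits.of_dvd ?_ (Polynomial.map_ne_zero (X_pow_sub_C_ne_zero (by norm_num) _))
        (Polynomial.map_dvd _ hdvd)⟩
      rw [halg]
      exact splits_aux φ₂ hc
    obtain ⟨ψ⟩ := IntermediateField.nonempty_algHom_adjoin_of_splits hsp
    apply core_notpow he₂ hd (ψ s)
    rw [← map_pow, hs, AlgHom.commutes, halg, hs₂]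
  -- claim C3
  have C3 : ∀ d : ℕ, 2 ≤ d → ∀ s : (adjoin (FractionRing (MvPolynomial (Fin 4) k)) {t₂, t₃} : IntermediateField (FractionRing (MvPolynomial (Fin 4) k)) E),
      s ^ d ≠ algebraMap (FractionRing (MvPolynomial (Fin 4) k)) _ (a 3) := by
    intro d hd s hs
    letI : Algebra (FractionRing (MvPolynomial (Fin 4) k)) (RatFunc Ω) := φ₃.toAlgebra
    have halg : algebraMap (FractionRing (MvPolynomial (Fin 4) k)) (RatFunc Ω) = φ₃ := rfl
    have hsp : ∀ s' ∈ ({t₂, t₃} : Set E), IsIntegral (FractionRing (MvPolynomial (Fin 4) k)) s' ∧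
        ((minpoly (FractionRing (MvPolynomial (Fin 4) k)) s').map (algebraMap (FractionRing (MvPolynomial (Fin 4) k)) (RatFunc Ω))).Splits := by
      intro s' hs'
      rcases hs' with hs' | hs'
      · rw [hs']
        obtain ⟨hint, hdvd⟩ := int_and_dvd ht₂'
        obtain ⟨c, hc⟩ := constshape φ₃ 3 hφ₃C 1 (by decide) (by decide)
        exact ⟨hint, Splits.of_dvd (halg ▸ splits_aux φ₃ hc)
          (Polynomial.map_ne_zero (X_pow_sub_C_ne_zero (by norm_num) _)) (Polynomial.map_dvd _ hdvd)⟩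
      · rw [Set.mem_singleton_iff] at hs'
        rw [hs']
        obtain ⟨hint, hdvd⟩ := int_and_dvd ht₃'
        obtain ⟨c, hc⟩ := constshape φ₃ 3 hφ₃C 2 (by decide) (by decide)
        exact ⟨hint, Splits.of_dvd (halg ▸ splits_aux φ₃ hc)
          (Polynomial.map_ne_zero (X_pow_sub_C_ne_zero (by norm_num) _)) (Polynomial.map_dvd _ hdvd)⟩
    obtain ⟨ψ⟩ := IntermediateField.nonempty_algHom_adjoin_of_splits hsp
    apply core_notpow he₃ hd (ψ s)
    rw [← map_pow, hs, AlgHom.commutes, halg, hs₃]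
  -- degrees
  have D1 : Module.finrank (FractionRing (MvPolynomial (Fin 4) k)) (adjoin (FractionRing (MvPolynomial (Fin 4) k)) {t₂} : IntermediateField (FractionRing (MvPolynomial (Fin 4) k)) E) = 6 :=
    step_deg6 ht₂' (C1 2 (by norm_num)) (C1 3 (by norm_num))
  set L1 : IntermediateField (FractionRing (MvPolynomial (Fin 4) k)) E := adjoin (FractionRing (MvPolynomial (Fin 4) k)) {t₂} with hL1
  set L2 : IntermediateField (FractionRing (MvPolynomial (Fin 4) k)) E := adjoin (FractionRing (MvPolynomial (Fin 4) k)) {t₂, t₃} with hL2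
  set L3 : IntermediateField (FractionRing (MvPolynomial (Fin 4) k)) E := adjoin (FractionRing (MvPolynomial (Fin 4) k)) {t₂, t₃, t₄} with hL3
  have h6₂ : t₃ ^ 6 = algebraMap (↥L1) E (algebraMap (FractionRing (MvPolynomial (Fin 4) k)) ↥L1 (a 2)) := by
    rw [← IsScalarTower.algebraMap_apply]; exact ht₃'
  have h6₃ : t₄ ^ 6 = algebraMap (↥L2) E (algebraMap (FractionRing (MvPolynomial (Fin 4) k)) ↥L2 (a 3)) := by
    rw [← IsScalarTower.algebraMap_apply]; exact ht₄'
  have D2 : Module.finrank ↥L1 (adjoin ↥L1 {t₃} : IntermediateField ↥L1 E) = 6 :=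
    step_deg6 h6₂ (C2 2 (by norm_num)) (C2 3 (by norm_num))
  have D3 : Module.finrank ↥L2 (adjoin ↥L2 {t₄} : IntermediateField ↥L2 E) = 6 :=
    step_deg6 h6₃ (C3 2 (by norm_num)) (C3 3 (by norm_num))
  -- assembly
  have hle12 : L1 ≤ L2 := by
    rw [hL1, hL2]
    apply IntermediateField.adjoin.mono
    intro y hy
    simp only [Set.mem_singleton_iff] at hy
    simp [hy]
  have hle23 : L2 ≤ L3 := by
    rw [hL2, hL3]
    apply IntermediateField.adjoin.mono
    intro y hy
    rcases hy with h | h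
    · exact Or.inl h
    · exact Or.inr (Or.inl h)
  have hExt12 : extendScalars hle12 = adjoin ↥L1 {t₃} := by
    rw [IntermediateField.extendScalars_adjoin hle12]
    apply le_antisymm
    · apply IntermediateField.adjoin_le_iff.2
      intro y hy
      rcases hy with h | h
      · rw [h]
        have ht2L1 : t₂ ∈ L1 := mem_adjoin_simple_self (FractionRing (MvPolynomial (Fin 4) k)) t₂
        exact (adjoin ↥L1 {t₃}).algebraMap_mem ⟨t₂, ht2L1⟩
      · rw [Set.mem_singleton_iff] at h
        rw [h]
        exact IntermediateField.subset_adjoin _ _ rfl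
    · apply IntermediateField.adjoin.mono
      intro y hy
      rw [Set.mem_singleton_iff] at hy
      simp [hy]
  have hExt23 : extendScalars hle23 = adjoin ↥L2 {t₄} := by
    rw [IntermediateField.extendScalars_adjoin hle23]
    apply le_antisymm
    · apply IntermediateField.adjoin_le_iff.2
      intro y hy
      rcases hy with h | h | h
      · rw [h]
        have : t₂ ∈ L2 := IntermediateField.subset_adjoin _ _ (Or.inl rfl)
        exact (adjoin ↥L2 {t₄}).algebraMap_mem ⟨t₂, this⟩
      · rw [h]
        have : t₃ ∈ L2 := IntermediateField.subset_adjoin _ _ (Or.inr rfl)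
        exact (adjoin ↥L2 {t₄}).algebraMap_mem ⟨t₃, this⟩
      · rw [Set.mem_singleton_iff] at h
        rw [h]
        exact IntermediateField.subset_adjoin _ _ rfl
    · apply IntermediateField.adjoin.mono
      intro y hy
      rw [Set.mem_singleton_iff] at hy
      simp [hy]
  have hR12 : IntermediateField.relfinrank L1 L2 = 6 := by
    rw [IntermediateField.relfinrank_eq_finrank_of_le hle12, hExt12]
    exact D2
  have hR23 : IntermediateField.relfinrank L2 L3 = 6 := by
    rw [IntermediateField.relfinrank_eq_finrank_of_le hle23, hExt23]
    exact D3
  have hA := IntermediateField.relfinrank_mul_relfinrank (bot_le : ⊥ ≤ L1) hle12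
  have hB := IntermediateField.relfinrank_mul_relfinrank (bot_le : ⊥ ≤ L2) hle23
  rw [IntermediateField.relfinrank_bot_left, IntermediateField.relfinrank_bot_left, hR12, D1]
    at hA
  rw [IntermediateField.relfinrank_bot_left, IntermediateField.relfinrank_bot_left, hR23, ← hA]
    at hB
  exact hB.symm.trans (by norm_num)
end

section
/- Let k be a field of characteristic different from 2 and 3, and let F = k(x_1, x_2, x_3, x_4) be the field of rational functions in four variables over k. Set c_i = x_i^2(x_i - 1) / (x_1^2(x_1 - 1)) ∈ F for i = 2, 3, 4. If m_2, m_3, m_4 are natural numbers such that c_2^{m_2} · c_3^{m_3} · c_4^{m_4} = f^6 for some f ∈ F, then 6 divides each of m_2, m_3, m_4. -/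
open MvPolynomial

theorem not_X_sub_one_dvd (k : Type*) [Field k] (i : Fin 4)
    (q : MvPolynomial (Fin 4) k)
    (hq : (MvPolynomial.aeval (fun j => if j = i then 1 else MvPolynomial.X j : Fin 4 → MvPolynomial (Fin 4) k)) q ≠ 0) :
    ¬ (MvPolynomial.X i - 1 ∣ q) := by
  intro ⟨r, hr⟩
  apply hq
  rw [hr, map_mul, map_sub, map_one, MvPolynomial.aeval_X, if_pos rfl, sub_self, zero_mul]

theorem X_sub_one_ne_zero (k : Type*) [Field k] (j : Fin 4) :
    (MvPolynomial.X j - 1 : MvPolynomial (Fin 4) k) ≠ 0 := by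
  intro h
  have h1 : MvPolynomial.X j = (1 : MvPolynomial (Fin 4) k) := by linear_combination h
  have := congrArg MvPolynomial.constantCoeff h1
  simp at this

theorem six_dvd_aux {A : Type*} [CommRing A] [IsDomain A] [UniqueFactorizationMonoid A]
    {π p s d a b : A} (hπ : Prime π) (hp : emultiplicity π p = 1) (hs : ¬ π ∣ s)
    (hd : ¬ π ∣ d) (ha : a ≠ 0) (hb : b ≠ 0) {m e : ℕ}
    (h : p ^ m * s * b ^ 6 = a ^ 6 * d ^ e) : 6 ∣ m := by
  have Fa : FiniteMultiplicity π a := FiniteMultiplicity.of_not_isUnit hπ.not_isUnit ha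
  have Fb : FiniteMultiplicity π b := FiniteMultiplicity.of_not_isUnit hπ.not_isUnit hb
  have H := congrArg (emultiplicity π) h
  rw [emultiplicity_mul hπ, emultiplicity_mul hπ, emultiplicity_mul hπ,
    emultiplicity_pow hπ, emultiplicity_pow hπ, emultiplicity_pow hπ, emultiplicity_pow hπ, hp,
    emultiplicity_eq_zero.2 hs, emultiplicity_eq_zero.2 hd,
    Fa.emultiplicity_eq_multiplicity, Fb.emultiplicity_eq_multiplicity] at H
  -- H : ↑m * 1 + 0 + 6 * ↑(multiplicity π b) = 6 * ↑(multiplicity π a) + ↑e * 0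
  rw [mul_one, add_zero, mul_zero, add_zero] at H
  have H2 : m + 6 * multiplicity π b = 6 * multiplicity π a := by exact_mod_cast H
  omega

open MvPolynomial

theorem prime_X_sub_one' (k : Type*) [Field k] (i : Fin 4) :
    Prime (MvPolynomial.X i - 1 : MvPolynomial (Fin 4) k) := by
  let e := (MvPolynomial.renameEquiv k (Equiv.swap i 0)).trans (MvPolynomial.finSuccEquiv k 3)
  rw [← MulEquiv.prime_iff e.toMulEquiv]
  have : e (MvPolynomial.X i - 1) = Polynomial.X - Polynomial.C 1 := by
    have : e (MvPolynomial.X i - 1)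
        = MvPolynomial.finSuccEquiv k 3 (MvPolynomial.rename (Equiv.swap i 0) (X i - 1)) := rfl
    rw [this, map_sub, map_one, MvPolynomial.rename_X, Equiv.swap_apply_left, map_sub, map_one,
      MvPolynomial.finSuccEquiv_X_zero, Polynomial.C_1]
  rw [show e.toMulEquiv (MvPolynomial.X i - 1) = e (MvPolynomial.X i - 1) from rfl, this]
  exact Polynomial.prime_X_sub_C 1

theorem not_X_sub_one_dvd' (k : Type*) [Field k] (i : Fin 4)
    (q : MvPolynomial (Fin 4) k)
    (hq : (MvPolynomial.aeval
      (fun j => if j = i then 1 else MvPolynomial.X j : Fin 4 → MvPolynomial (Fin 4) k)) q ≠ 0) :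
    ¬ (MvPolynomial.X i - 1 ∣ q) := by
  intro ⟨r, hr⟩
  apply hq
  rw [hr, map_mul, map_sub, map_one, MvPolynomial.aeval_X, if_pos rfl, sub_self, zero_mul]

theorem X_sub_one_ne_zero' (k : Type*) [Field k] (j : Fin 4) :
    (MvPolynomial.X j - 1 : MvPolynomial (Fin 4) k) ≠ 0 := by
  intro h
  have h1 : MvPolynomial.X j = (1 : MvPolynomial (Fin 4) k) := by linear_combination h
  have := congrArg MvPolynomial.constantCoeff h1
  simp at this

theorem not_dvd_N' (k : Type*) [Field k] {i j : Fin 4} (h : j ≠ i) :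
    ¬ (MvPolynomial.X i - 1 ∣ (MvPolynomial.X j ^ 2 * (MvPolynomial.X j - 1)
      : MvPolynomial (Fin 4) k)) := by
  apply not_X_sub_one_dvd'
  rw [map_mul, map_pow, map_sub, map_one, MvPolynomial.aeval_X, if_neg h]
  exact mul_ne_zero (pow_ne_zero _ (MvPolynomial.X_ne_zero j)) (X_sub_one_ne_zero' k j)

theorem not_dvd_Xi_sq (k : Type*) [Field k] (i : Fin 4) :
    ¬ (MvPolynomial.X i - 1 ∣ (MvPolynomial.X i ^ 2 : MvPolynomial (Fin 4) k)) := by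
  intro h
  have := (prime_X_sub_one' k i).dvd_of_dvd_pow h
  refine not_X_sub_one_dvd' k i _ ?_ this
  rw [MvPolynomial.aeval_X, if_pos rfl]
  exact one_ne_zero

theorem emult_N (k : Type*) [Field k] (i : Fin 4) :
    emultiplicity (MvPolynomial.X i - 1)
      (MvPolynomial.X i ^ 2 * (MvPolynomial.X i - 1) : MvPolynomial (Fin 4) k) = 1 := by
  have hπ := prime_X_sub_one' k i
  have Fπ : FiniteMultiplicity (MvPolynomial.X i - 1)
      (MvPolynomial.X i - 1 : MvPolynomial (Fin 4) k) :=
    FiniteMultiplicity.of_not_isUnit hπ.not_isUnit (X_sub_one_ne_zero' k i)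
  rw [emultiplicity_mul hπ, emultiplicity_eq_zero.2 (not_dvd_Xi_sq k i),
    Fπ.emultiplicity_self, zero_add]
theorem stmt_1_main (k : Type*) [Field k]
    (x : Fin 4 → FractionRing (MvPolynomial (Fin 4) k))
    (hx : ∀ i, x i = algebraMap (MvPolynomial (Fin 4) k)
      (FractionRing (MvPolynomial (Fin 4) k)) (MvPolynomial.X i))
    (c : Fin 4 → FractionRing (MvPolynomial (Fin 4) k))
    (hc : ∀ i, c i = (x i) ^ 2 * (x i - 1) / ((x 0) ^ 2 * (x 0 - 1)))
    (m₂ m₃ m₄ : ℕ) (f : FractionRing (MvPolynomial (Fin 4) k))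
    (hf : (c 1) ^ m₂ * (c 2) ^ m₃ * (c 3) ^ m₄ = f ^ 6) :
    6 ∣ m₂ ∧ 6 ∣ m₃ ∧ 6 ∣ m₄ := by
  classical
  let A := MvPolynomial (Fin 4) k
  let F := FractionRing A
  let ι : A →+* F := algebraMap A F
  have hinj : Function.Injective ι := IsFractionRing.injective A F
  let N : Fin 4 → A := fun i => MvPolynomial.X i ^ 2 * (MvPolynomial.X i - 1)
  have hN0 : ∀ i, N i ≠ 0 := fun i =>
    mul_ne_zero (pow_ne_zero _ (MvPolynomial.X_ne_zero i)) (X_sub_one_ne_zero' k i)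
  have hιN0 : ∀ i, ι (N i) ≠ 0 := fun i h => hN0 i (hinj (by simpa using h))
  have hcN : ∀ i, c i = ι (N i) / ι (N 0) := by
    intro i
    rw [hc i, hx i, hx 0]
    show _ = ι (MvPolynomial.X i ^ 2 * (MvPolynomial.X i - 1)) /
      ι (MvPolynomial.X 0 ^ 2 * (MvPolynomial.X 0 - 1))
    simp [map_mul, map_pow, map_sub, map_one]
    rfl
  obtain ⟨a, b, hb0', hfab⟩ := IsFractionRing.div_surjective (A := A) f
  have hb0 : b ≠ 0 := nonZeroDivisors.ne_zero hb0'
  have hιb : ι b ≠ 0 := fun h => hb0 (hinj (by simpa using h))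
  have E : N 1 ^ m₂ * N 2 ^ m₃ * N 3 ^ m₄ * b ^ 6 = a ^ 6 * N 0 ^ (m₂ + m₃ + m₄) := by
    apply hinj
    rw [hcN 1, hcN 2, hcN 3, ← hfab] at hf
    rw [div_pow, div_pow, div_pow, div_mul_div_comm, div_mul_div_comm, div_pow,
      div_eq_div_iff (mul_ne_zero (mul_ne_zero (pow_ne_zero _ (hιN0 0))
        (pow_ne_zero _ (hιN0 0))) (pow_ne_zero _ (hιN0 0))) (pow_ne_zero _ hιb)] at hf
    simp only [map_mul, map_pow]
    linear_combination hf
  have ha0 : a ≠ 0 := by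
    intro h
    rw [h] at E
    exact (mul_ne_zero (mul_ne_zero (mul_ne_zero (pow_ne_zero _ (hN0 1))
      (pow_ne_zero _ (hN0 2))) (pow_ne_zero _ (hN0 3))) (pow_ne_zero _ hb0))
      (E.trans (by ring))
  have key : ∀ (i : Fin 4) (m : ℕ), i ≠ 0 →
      (∃ s : A, ¬ (MvPolynomial.X i - 1) ∣ s ∧
        N i ^ m * s * b ^ 6 = a ^ 6 * N 0 ^ (m₂ + m₃ + m₄)) → 6 ∣ m := by
    intro i m hi ⟨s, hs, hE⟩
    exact six_dvd_aux (prime_X_sub_one' k i) (emult_N k i) hs (not_dvd_N' k hi.symm) ha0 hb0 hE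
  have hdvd2 : ∀ (i j l : Fin 4) (mj ml : ℕ), j ≠ i → l ≠ i →
      ¬ (MvPolynomial.X i - 1) ∣ (N j ^ mj * N l ^ ml) := by
    intro i j l mj ml hj hl hd
    rcases (prime_X_sub_one' k i).dvd_mul.1 hd with h | h
    · exact not_dvd_N' k hj ((prime_X_sub_one' k i).dvd_of_dvd_pow h)
    · exact not_dvd_N' k hl ((prime_X_sub_one' k i).dvd_of_dvd_pow h)
  refine ⟨key 1 m₂ (by decide) ⟨N 2 ^ m₃ * N 3 ^ m₄,
      hdvd2 1 2 3 m₃ m₄ (by decide) (by decide), by linear_combination E⟩,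
    key 2 m₃ (by decide) ⟨N 1 ^ m₂ * N 3 ^ m₄,
      hdvd2 2 1 3 m₂ m₄ (by decide) (by decide), by linear_combination E⟩,
    key 3 m₄ (by decide) ⟨N 1 ^ m₂ * N 2 ^ m₃,
      hdvd2 3 1 2 m₂ m₃ (by decide) (by decide), by linear_combination E⟩⟩

/-- Let `k` be a field of characteristic different from 2 and 3, and let
`F = k(x₁, x₂, x₃, x₄)` be the field of rational functions in four variables over `k`.
Set `cᵢ = xᵢ²(xᵢ - 1) / (x₁²(x₁ - 1)) ∈ F` for `i = 2, 3, 4`. If `m₂, m₃, m₄` are natural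
numbers such that `c₂^m₂ · c₃^m₃ · c₄^m₄ = f⁶` for some `f ∈ F`, then `6` divides each of
`m₂, m₃, m₄`. -/
theorem stmt_1 (k : Type*) [Field k] (h2 : (2 : k) ≠ 0) (h3 : (3 : k) ≠ 0)
    (x : Fin 4 → FractionRing (MvPolynomial (Fin 4) k))
    (hx : ∀ i, x i = algebraMap (MvPolynomial (Fin 4) k)
      (FractionRing (MvPolynomial (Fin 4) k)) (MvPolynomial.X i))
    (c : Fin 4 → FractionRing (MvPolynomial (Fin 4) k))
    (hc : ∀ i, c i = (x i) ^ 2 * (x i - 1) / ((x 0) ^ 2 * (x 0 - 1)))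
    (m₂ m₃ m₄ : ℕ) (f : FractionRing (MvPolynomial (Fin 4) k))
    (hf : (c 1) ^ m₂ * (c 2) ^ m₃ * (c 3) ^ m₄ = f ^ 6) :
    6 ∣ m₂ ∧ 6 ∣ m₃ ∧ 6 ∣ m₄ :=
  stmt_1_main k x hx c hc m₂ m₃ m₄ f hf
end

section
/- Let F be a field of characteristic different from 2, and let s_3, s_4, w_2, w_3, w_4 ∈ F with w_2^3 ≠ 1, s_3^2(w_2^3 - 1) ≠ w_3^3 - 1, and s_4^2(w_2^3 - 1) ≠ w_4^3 - 1. Suppose (s_3 - s_4) s_3 s_4 (w_2^3 - 1) - (s_3 - 1) s_3 (w_4^3 - 1) + (s_4 - 1) s_4 (w_3^3 - 1) = 0. Then the element v_2 := 1 + 2(-s_3(w_2^3 - 1) + (w_3^3 - 1)) / (s_3^2(w_2^3 - 1) - (w_3^3 - 1)) satisfies, with v_i := s_i(v_2 - 1) + 1, the equations (v_i^2 - 1)(w_2^3 - 1) = (v_2^2 - 1)(w_i^3 - 1) for both i = 3 and i = 4. -/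
/-- Let `F` be a field of characteristic different from 2, and let
`s₃, s₄, w₂, w₃, w₄ ∈ F` with `w₂³ ≠ 1`, `s₃²(w₂³ - 1) ≠ w₃³ - 1`, and
`s₄²(w₂³ - 1) ≠ w₄³ - 1`. Suppose
`(s₃ - s₄) s₃ s₄ (w₂³ - 1) - (s₃ - 1) s₃ (w₄³ - 1) + (s₄ - 1) s₄ (w₃³ - 1) = 0`. Then
`v₂ := 1 + 2(-s₃(w₂³ - 1) + (w₃³ - 1)) / (s₃²(w₂³ - 1) - (w₃³ - 1))` satisfies, with
`vᵢ := sᵢ(v₂ - 1) + 1`, the equations `(vᵢ² - 1)(w₂³ - 1) = (v₂² - 1)(wᵢ³ - 1)` for both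
`i = 3` and `i = 4`. -/
theorem stmt_8 (F : Type*) [Field F] (h2 : (2 : F) ≠ 0)
    (s₃ s₄ w₂ w₃ w₄ : F) (hw₂ : w₂ ^ 3 ≠ 1)
    (hd₃ : s₃ ^ 2 * (w₂ ^ 3 - 1) ≠ w₃ ^ 3 - 1)
    (hd₄ : s₄ ^ 2 * (w₂ ^ 3 - 1) ≠ w₄ ^ 3 - 1)
    (hrel : (s₃ - s₄) * s₃ * s₄ * (w₂ ^ 3 - 1) - (s₃ - 1) * s₃ * (w₄ ^ 3 - 1) +
      (s₄ - 1) * s₄ * (w₃ ^ 3 - 1) = 0)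
    (v₂ v₃ v₄ : F)
    (hv₂ : v₂ = 1 + 2 * (-s₃ * (w₂ ^ 3 - 1) + (w₃ ^ 3 - 1)) /
      (s₃ ^ 2 * (w₂ ^ 3 - 1) - (w₃ ^ 3 - 1)))
    (hv₃ : v₃ = s₃ * (v₂ - 1) + 1) (hv₄ : v₄ = s₄ * (v₂ - 1) + 1) :
    (v₃ ^ 2 - 1) * (w₂ ^ 3 - 1) = (v₂ ^ 2 - 1) * (w₃ ^ 3 - 1) ∧
    (v₄ ^ 2 - 1) * (w₂ ^ 3 - 1) = (v₂ ^ 2 - 1) * (w₄ ^ 3 - 1) := by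
  have hD : s₃ ^ 2 * (w₂ ^ 3 - 1) - (w₃ ^ 3 - 1) ≠ 0 := sub_ne_zero.mpr hd₃
  have hk : (v₂ - 1) * (s₃ ^ 2 * (w₂ ^ 3 - 1) - (w₃ ^ 3 - 1)) =
      2 * (-s₃ * (w₂ ^ 3 - 1) + (w₃ ^ 3 - 1)) := by
    rw [hv₂]; field_simp; ring
  subst hv₃ hv₄
  constructor
  · linear_combination (v₂ - 1) * hk
  · refine mul_right_cancel₀ hD ?_
    linear_combination (2 * (v₂ - 1) * (w₂ ^ 3 - 1)) * hrel +
      ((v₂ - 1) * (s₄ ^ 2 * (w₂ ^ 3 - 1) - (w₄ ^ 3 - 1))) * hk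
end

section
/- Let F be a field of characteristic different from 2, and let s_3, s_4, s_5, v_2, w_2, w_3, w_4, w_5 ∈ F with v_2 ≠ 1 and w_2^3 ≠ 1. Define v_i := s_i(v_2 - 1) + 1 for i = 3, 4, 5, and suppose (v_i^2 - 1)(w_2^3 - 1) = (v_2^2 - 1)(w_i^3 - 1) for i = 3, 4, 5. Then both equations hold: (s_3 - s_4) s_3 s_4 (w_2^3 - 1) = (s_3 - 1) s_3 (w_4^3 - 1) - (s_4 - 1) s_4 (w_3^3 - 1), and (s_3 - s_5) s_3 s_5 (w_2^3 - 1) = (s_3 - 1) s_3 (w_5^3 - 1) - (s_5 - 1) s_5 (w_3^3 - 1). -/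
/-- Let `F` be a field of characteristic different from 2, and let
`s₃, s₄, s₅, v₂, w₂, w₃, w₄, w₅ ∈ F` with `v₂ ≠ 1` and `w₂³ ≠ 1`. Define
`vᵢ := sᵢ(v₂ - 1) + 1` for `i = 3, 4, 5`, and suppose
`(vᵢ² - 1)(w₂³ - 1) = (v₂² - 1)(wᵢ³ - 1)` for `i = 3, 4, 5`. Then both equations hold:
`(s₃ - s₄) s₃ s₄ (w₂³ - 1) = (s₃ - 1) s₃ (w₄³ - 1) - (s₄ - 1) s₄ (w₃³ - 1)` and
`(s₃ - s₅) s₃ s₅ (w₂³ - 1) = (s₃ - 1) s₃ (w₅³ - 1) - (s₅ - 1) s₅ (w₃³ - 1)`. -/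
theorem stmt_9 (F : Type*) [Field F] (h2 : (2 : F) ≠ 0)
    (s₃ s₄ s₅ v₂ w₂ w₃ w₄ w₅ : F) (hv₂ : v₂ ≠ 1) (hw₂ : w₂ ^ 3 ≠ 1)
    (v₃ v₄ v₅ : F) (hv₃ : v₃ = s₃ * (v₂ - 1) + 1) (hv₄ : v₄ = s₄ * (v₂ - 1) + 1)
    (hv₅ : v₅ = s₅ * (v₂ - 1) + 1)
    (h₃ : (v₃ ^ 2 - 1) * (w₂ ^ 3 - 1) = (v₂ ^ 2 - 1) * (w₃ ^ 3 - 1))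
    (h₄ : (v₄ ^ 2 - 1) * (w₂ ^ 3 - 1) = (v₂ ^ 2 - 1) * (w₄ ^ 3 - 1))
    (h₅ : (v₅ ^ 2 - 1) * (w₂ ^ 3 - 1) = (v₂ ^ 2 - 1) * (w₅ ^ 3 - 1)) :
    (s₃ - s₄) * s₃ * s₄ * (w₂ ^ 3 - 1) =
      (s₃ - 1) * s₃ * (w₄ ^ 3 - 1) - (s₄ - 1) * s₄ * (w₃ ^ 3 - 1) ∧
    (s₃ - s₅) * s₃ * s₅ * (w₂ ^ 3 - 1) =
      (s₃ - 1) * s₃ * (w₅ ^ 3 - 1) - (s₅ - 1) * s₅ * (w₃ ^ 3 - 1) := by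

  subst hv₃ hv₄ hv₅
  have hW : w₂ ^ 3 - 1 ≠ 0 := sub_ne_zero.mpr hw₂
  by_cases hv : v₂ = -1
  · subst hv
    have hs : ∀ s w : F, ((s * ((-1:F) - 1) + 1) ^ 2 - 1) * (w₂ ^ 3 - 1) =
        ((-1:F) ^ 2 - 1) * (w ^ 3 - 1) → s = 0 ∨ s = 1 := by
      intro s w h
      have h4 : (2:F) * 2 * (s * (s - 1)) * (w₂ ^ 3 - 1) = 0 := by linear_combination h
      rcases mul_eq_zero.mp h4 with h' | h'
      · rcases mul_eq_zero.mp h' with h'' | h''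
        · exact absurd h'' (mul_ne_zero h2 h2)
        · rcases mul_eq_zero.mp h'' with h3 | h3
          · exact Or.inl h3
          · exact Or.inr (sub_eq_zero.mp h3)
      · exact absurd h' hW
    have e3 := hs s₃ w₃ h₃
    have e4 := hs s₄ w₄ h₄
    have e5 := hs s₅ w₅ h₅
    constructor
    · rcases e3 with h3 | h3 <;> rcases e4 with h4 | h4 <;> subst h3 h4 <;> ring
    · rcases e3 with h3 | h3 <;> rcases e5 with h5 | h5 <;> subst h3 h5 <;> ring
  · have hne : v₂ ^ 2 - 1 ≠ 0 := by
      intro h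
      have : (v₂ - 1) * (v₂ + 1) = 0 := by linear_combination h
      rcases mul_eq_zero.mp this with h' | h'
      · exact hv₂ (sub_eq_zero.mp h')
      · exact hv (eq_neg_of_add_eq_zero_left h')
    constructor
    · apply mul_left_cancel₀ hne
      linear_combination (s₃ - 1) * s₃ * h₄ - (s₄ - 1) * s₄ * h₃
    · apply mul_left_cancel₀ hne
      linear_combination (s₃ - 1) * s₃ * h₅ - (s₅ - 1) * s₅ * h₃
end

section
/- Let K be a field, let a_1, a_2, a_3, a_4 ∈ K be all nonzero, let (i, j, h, k) be a permutation of (1, 2, 3, 4), and let p = (p_1, p_2, p_3, p_4) ∈ K^4 satisfy p_i = 0, p_j = 0, p_h ≠ 0, p_k ≠ 0, and a_h p_h^3 + a_k p_k^3 = 0. Then for every y = (y_1, y_2, y_3, y_4) ∈ K^4 the following are equivalent: (1) a_1 y_1^3 + a_2 y_2^3 + a_3 y_3^3 + a_4 y_4^3 = 0 and a_h p_h^2 y_h + a_k p_k^2 y_k = 0; (2) p_k y_h = p_h y_k and a_i y_i^3 + a_j y_j^3 = 0. (That is, the intersection of the diagonal cubic surface with its tangent plane at the point p is the union of the three lines given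 by p_k y_h = p_h y_k and a_i y_i^3 + a_j y_j^3 = 0, so p is an Eckardt point.) -/
lemma eckardt_key {K : Type*} [Field K] {ah ak ph pk yh yk A : K}
    (hah : ah ≠ 0) (hph : ph ≠ 0) (hpk : pk ≠ 0)
    (hp : ah * ph ^ 3 + ak * pk ^ 3 = 0) :
    (A + ah * yh ^ 3 + ak * yk ^ 3 = 0 ∧ ah * ph ^ 2 * yh + ak * pk ^ 2 * yk = 0) ↔
      (pk * yh = ph * yk ∧ A = 0) := by
  constructor
  · rintro ⟨h1, h2⟩
    have h3 : ah * ph ^ 2 * (pk * yh - ph * yk) = 0 := by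
      linear_combination pk * h2 - yk * hp
    have h4 : pk * yh - ph * yk = 0 := by
      rcases mul_eq_zero.mp h3 with h | h
      · exact absurd h (mul_ne_zero hah (pow_ne_zero 2 hph))
      · exact h
    refine ⟨by linear_combination h4, ?_⟩
    have h5 : A * pk ^ 3 = 0 := by
      linear_combination pk ^ 3 * h1 - yk ^ 3 * hp -
        ah * (pk ^ 2 * yh ^ 2 + pk * yh * ph * yk + ph ^ 2 * yk ^ 2) * h4
    rcases mul_eq_zero.mp h5 with h | h
    · exact h
    · exact absurd h (pow_ne_zero 3 hpk)
  · rintro ⟨ht, hA⟩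
    have hts : pk * yh - ph * yk = 0 := by linear_combination ht
    constructor
    · have h : pk ^ 3 * (A + ah * yh ^ 3 + ak * yk ^ 3) = 0 := by
        linear_combination pk ^ 3 * hA + yk ^ 3 * hp +
          ah * (pk ^ 2 * yh ^ 2 + pk * yh * ph * yk + ph ^ 2 * yk ^ 2) * hts
      rcases mul_eq_zero.mp h with h' | h'
      · exact absurd h' (pow_ne_zero 3 hpk)
      · exact h'
    · have h : pk * (ah * ph ^ 2 * yh + ak * pk ^ 2 * yk) = 0 := by
        linear_combination ah * ph ^ 2 * hts + yk * hp
      rcases mul_eq_zero.mp h with h' | h'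
      · exact absurd h' hpk
      · exact h'

/-- Let `K` be a field, let `a₁, a₂, a₃, a₄ ∈ K` be all nonzero, let
`(i, j, h, k)` be a permutation of `(1, 2, 3, 4)`, and let `p ∈ K⁴` satisfy `pᵢ = 0`,
`pⱼ = 0`, `pₕ ≠ 0`, `pₖ ≠ 0`, and `aₕpₕ³ + aₖpₖ³ = 0`. Then for every `y ∈ K⁴` the
following are equivalent: (1) `a₁y₁³ + a₂y₂³ + a₃y₃³ + a₄y₄³ = 0` and
`aₕpₕ²yₕ + aₖpₖ²yₖ = 0`; (2) `pₖyₕ = pₕyₖ` and `aᵢyᵢ³ + aⱼyⱼ³ = 0`. (That is, the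
intersection of the diagonal cubic surface with its tangent plane at `p` is the union of
the three lines given by `pₖyₕ = pₕyₖ` and `aᵢyᵢ³ + aⱼyⱼ³ = 0`, so `p` is an Eckardt
point.) -/
theorem stmt_12 (K : Type*) [Field K] (a : Fin 4 → K) (ha : ∀ m, a m ≠ 0)
    (e : Equiv.Perm (Fin 4)) (p : Fin 4 → K)
    (hpi : p (e 0) = 0) (hpj : p (e 1) = 0) (hph : p (e 2) ≠ 0) (hpk : p (e 3) ≠ 0)
    (hp : a (e 2) * p (e 2) ^ 3 + a (e 3) * p (e 3) ^ 3 = 0)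
    (y : Fin 4 → K) :
    ((∑ m : Fin 4, a m * y m ^ 3 = 0) ∧
      a (e 2) * p (e 2) ^ 2 * y (e 2) + a (e 3) * p (e 3) ^ 2 * y (e 3) = 0) ↔
    (p (e 3) * y (e 2) = p (e 2) * y (e 3) ∧
      a (e 0) * y (e 0) ^ 3 + a (e 1) * y (e 1) ^ 3 = 0) := by
  rw [← Equiv.sum_comp e (fun m => a m * y m ^ 3), Fin.sum_univ_four]
  exact eckardt_key (ha (e 2)) hph hpk hp
end
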